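/- Let σ : ℝ × ℝ → ℝ × ℝ with components σ¹, σ² positive and C¹ on (0,∞)², satisfying the compatibility relation ∂₂(log σ¹) = ∂₁(log σ²) on (0,∞)². Fix f_∞ = (f_∞¹, f_∞²) in (0,∞)² and define G(f¹, f²) = ∫_{f_∞¹}^{f¹} log(σ¹(s, f²)/σ¹(f_∞)) ds + ∫_{f_∞²}^{f²} log(σ²(f_∞¹, s)/σ²(f_∞)) ds. Then ∂G/∂f¹(f¹,f²) = log(σ¹(f¹,f²)/σ¹(f_∞)) and ∂G/∂f²(f¹,f²) = log(σ²(f¹,f²)/σ²(f_∞)) for all (f¹,f²) ∈ (0,∞)². -/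

import Mathlib

open Set MeasureTheory intervalIntegral Metric

private lemma isOpenS : IsOpen (Set.Ioi (0:ℝ) ×ˢ Set.Ioi (0:ℝ)) :=
  isOpen_Ioi.prod isOpen_Ioi

/-- partial derivative of `log σ` in the second variable -/
private lemma aux_hasDerivAt_snd (σ : ℝ × ℝ → ℝ)
    (hσ : ContDiffOn ℝ 1 σ (Set.Ioi (0:ℝ) ×ˢ Set.Ioi (0:ℝ)))
    (hpos : ∀ p ∈ Set.Ioi (0:ℝ) ×ˢ Set.Ioi (0:ℝ), 0 < σ p)
    {x y : ℝ} (hx : 0 < x) (hy : 0 < y) :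
    HasDerivAt (fun t => Real.log (σ (x, t)))
      (fderiv ℝ σ (x, y) (0, 1) / σ (x, y)) y := by
  have hmem : ((x, y) : ℝ × ℝ) ∈ Set.Ioi (0:ℝ) ×ˢ Set.Ioi (0:ℝ) := ⟨hx, hy⟩
  have hd : DifferentiableAt ℝ σ (x, y) :=
    (hσ.contDiffAt (isOpenS.mem_nhds hmem)).differentiableAt one_ne_zero
  have h1 : HasDerivAt (fun t : ℝ => ((x, t) : ℝ × ℝ)) ((0:ℝ), (1:ℝ)) y :=
    (hasDerivAt_const y x).prodMk (hasDerivAt_id y)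
  have h2 : HasDerivAt (fun t => σ (x, t)) (fderiv ℝ σ (x, y) (0, 1)) y :=
    hd.hasFDerivAt.comp_hasDerivAt y h1
  exact h2.log (ne_of_gt (hpos _ hmem))

/-- partial derivative of `log σ` in the first variable -/
private lemma aux_hasDerivAt_fst (σ : ℝ × ℝ → ℝ)
    (hσ : ContDiffOn ℝ 1 σ (Set.Ioi (0:ℝ) ×ˢ Set.Ioi (0:ℝ)))
    (hpos : ∀ p ∈ Set.Ioi (0:ℝ) ×ˢ Set.Ioi (0:ℝ), 0 < σ p)
    {x y : ℝ} (hx : 0 < x) (hy : 0 < y) :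
    HasDerivAt (fun s => Real.log (σ (s, y)))
      (fderiv ℝ σ (x, y) (1, 0) / σ (x, y)) x := by
  have hmem : ((x, y) : ℝ × ℝ) ∈ Set.Ioi (0:ℝ) ×ˢ Set.Ioi (0:ℝ) := ⟨hx, hy⟩
  have hd : DifferentiableAt ℝ σ (x, y) :=
    (hσ.contDiffAt (isOpenS.mem_nhds hmem)).differentiableAt one_ne_zero
  have h1 : HasDerivAt (fun s : ℝ => ((s, y) : ℝ × ℝ)) ((1:ℝ), (0:ℝ)) x :=
    (hasDerivAt_id x).prodMk (hasDerivAt_const x y)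
  have h2 : HasDerivAt (fun s => σ (s, y)) (fderiv ℝ σ (x, y) (1, 0)) x :=
    hd.hasFDerivAt.comp_hasDerivAt x h1
  exact h2.log (ne_of_gt (hpos _ hmem))

private lemma aux_contOn (σ : ℝ × ℝ → ℝ)
    (hσ : ContDiffOn ℝ 1 σ (Set.Ioi (0:ℝ) ×ˢ Set.Ioi (0:ℝ)))
    (hpos : ∀ p ∈ Set.Ioi (0:ℝ) ×ˢ Set.Ioi (0:ℝ), 0 < σ p) (v : ℝ × ℝ) :
    ContinuousOn (fun p => fderiv ℝ σ p v / σ p)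
      (Set.Ioi (0:ℝ) ×ˢ Set.Ioi (0:ℝ)) := by
  have h1 : ContinuousOn (fderiv ℝ σ) (Set.Ioi (0:ℝ) ×ˢ Set.Ioi (0:ℝ)) :=
    hσ.continuousOn_fderiv_of_isOpen isOpenS le_rfl
  exact (h1.clm_apply continuousOn_const).div hσ.continuousOn
    (fun p hp => (hpos p hp).ne')

theorem stmt_13 (σ1 σ2 : ℝ × ℝ → ℝ)
    (hσ1 : ContDiffOn ℝ 1 σ1 (Set.Ioi (0:ℝ) ×ˢ Set.Ioi (0:ℝ)))
    (hσ2 : ContDiffOn ℝ 1 σ2 (Set.Ioi (0:ℝ) ×ˢ Set.Ioi (0:ℝ)))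
    (hσ1pos : ∀ p ∈ Set.Ioi (0:ℝ) ×ˢ Set.Ioi (0:ℝ), 0 < σ1 p)
    (hσ2pos : ∀ p ∈ Set.Ioi (0:ℝ) ×ˢ Set.Ioi (0:ℝ), 0 < σ2 p)
    (hcompat : ∀ x y : ℝ, 0 < x → 0 < y →
      deriv (fun t => Real.log (σ1 (x, t))) y = deriv (fun t => Real.log (σ2 (t, y))) x)
    (a b : ℝ) (ha : 0 < a) (hb : 0 < b) :
    ∀ f1 f2 : ℝ, 0 < f1 → 0 < f2 →
      HasDerivAt (fun u : ℝ =>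
          (∫ s in a..u, Real.log (σ1 (s, f2) / σ1 (a, b))) +
            ∫ s in b..f2, Real.log (σ2 (a, s) / σ2 (a, b)))
        (Real.log (σ1 (f1, f2) / σ1 (a, b))) f1 ∧
      HasDerivAt (fun v : ℝ =>
          (∫ s in a..f1, Real.log (σ1 (s, v) / σ1 (a, b))) +
            ∫ s in b..v, Real.log (σ2 (a, s) / σ2 (a, b)))
        (Real.log (σ2 (f1, f2) / σ2 (a, b))) f2 := by
  intro f1 f2 hf1 hf2
  have hab : ((a, b) : ℝ × ℝ) ∈ Set.Ioi (0:ℝ) ×ˢ Set.Ioi (0:ℝ) := ⟨ha, hb⟩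
  have hc1 : σ1 (a, b) ≠ 0 := (hσ1pos _ hab).ne'
  have hc2 : σ2 (a, b) ≠ 0 := (hσ2pos _ hab).ne'
  -- continuity of the first integrand in s, for any fixed positive second coordinate
  have hcont1 : ∀ v : ℝ, 0 < v →
      ContinuousOn (fun s => Real.log (σ1 (s, v) / σ1 (a, b))) (Set.Ioi (0:ℝ)) := by
    intro v hv
    have hc : ContinuousOn (fun s : ℝ => σ1 (s, v)) (Set.Ioi (0:ℝ)) :=
      hσ1.continuousOn.comp (continuous_id.prodMk continuous_const).continuousOn
        (fun s hs => Set.mem_prod.mpr ⟨hs, hv⟩)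
    exact (hc.div_const _).log
      (fun s hs => div_ne_zero (hσ1pos (s,v) (Set.mem_prod.mpr ⟨hs, hv⟩)).ne' hc1)
  have hcont2 : ContinuousOn (fun s => Real.log (σ2 (a, s) / σ2 (a, b))) (Set.Ioi (0:ℝ)) := by
    have hc : ContinuousOn (fun s : ℝ => σ2 (a, s)) (Set.Ioi (0:ℝ)) :=
      hσ2.continuousOn.comp (continuous_const.prodMk continuous_id).continuousOn
        (fun s hs => Set.mem_prod.mpr ⟨ha, hs⟩)
    exact (hc.div_const _).log
      (fun s hs => div_ne_zero (hσ2pos (a,s) (Set.mem_prod.mpr ⟨ha, hs⟩)).ne' hc2)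
  have hsub1 : Set.uIcc a f1 ⊆ Set.Ioi (0:ℝ) := by
    intro s hs
    rcases Set.mem_uIcc.mp hs with h | h
    · exact lt_of_lt_of_le ha h.1
    · exact lt_of_lt_of_le hf1 h.1
  have hsub2 : Set.uIcc b f2 ⊆ Set.Ioi (0:ℝ) := by
    intro s hs
    rcases Set.mem_uIcc.mp hs with h | h
    · exact lt_of_lt_of_le hb h.1
    · exact lt_of_lt_of_le hf2 h.1
  constructor
  · -- first component
    have hint : IntervalIntegrable (fun s => Real.log (σ1 (s, f2) / σ1 (a, b)))
        volume a f1 :=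
      ((hcont1 f2 hf2).mono hsub1).intervalIntegrable
    have hmeas : StronglyMeasurableAtFilter
        (fun s => Real.log (σ1 (s, f2) / σ1 (a, b))) (nhds f1) volume :=
      ⟨Set.Ioi 0, isOpen_Ioi.mem_nhds hf1,
        ((hcont1 f2 hf2).aestronglyMeasurable measurableSet_Ioi)⟩
    have hca : ContinuousAt (fun s => Real.log (σ1 (s, f2) / σ1 (a, b))) f1 :=
      (hcont1 f2 hf2).continuousAt (isOpen_Ioi.mem_nhds hf1)
    exact (intervalIntegral.integral_hasDerivAt_right hint hmeas hca).add_const _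
  · -- second component
    -- derivative of the second (one-variable) integral: FTC-1
    have hG2 : HasDerivAt (fun v => ∫ s in b..v, Real.log (σ2 (a, s) / σ2 (a, b)))
        (Real.log (σ2 (a, f2) / σ2 (a, b))) f2 := by
      have hint2 : IntervalIntegrable (fun s => Real.log (σ2 (a, s) / σ2 (a, b)))
          volume b f2 := (hcont2.mono hsub2).intervalIntegrable
      have hmeas2 : StronglyMeasurableAtFilter
          (fun s => Real.log (σ2 (a, s) / σ2 (a, b))) (nhds f2) volume :=
        ⟨Set.Ioi 0, isOpen_Ioi.mem_nhds hf2,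
          hcont2.aestronglyMeasurable measurableSet_Ioi⟩
      exact intervalIntegral.integral_hasDerivAt_right hint2 hmeas2
        (hcont2.continuousAt (isOpen_Ioi.mem_nhds hf2))
    have hsubI : Set.uIoc a f1 ⊆ Set.Ioi (0:ℝ) :=
      fun t ht => hsub1 (Set.Ioc_subset_Icc_self ht)
    -- differentiation under the integral sign for the first integral
    have hε : (0:ℝ) < f2 / 2 := by positivity
    have hballIcc : Metric.ball f2 (f2 / 2) ⊆ Set.Icc (f2 / 2) (f2 + f2 / 2) := by
      intro x hx
      rw [Real.ball_eq_Ioo] at hx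
      constructor <;> [linarith [hx.1]; linarith [hx.2]]
    have hballpos : ∀ x ∈ Metric.ball f2 (f2 / 2), (0:ℝ) < x :=
      fun x hx => lt_of_lt_of_le hε (hballIcc hx).1
    have hKS : Set.uIcc a f1 ×ˢ Set.Icc (f2 / 2) (f2 + f2 / 2) ⊆
        Set.Ioi (0:ℝ) ×ˢ Set.Ioi (0:ℝ) := by
      intro p hp
      exact ⟨hsub1 hp.1, lt_of_lt_of_le hε hp.2.1⟩
    have hK : IsCompact (Set.uIcc a f1 ×ˢ Set.Icc (f2 / 2) (f2 + f2 / 2)) :=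
      isCompact_uIcc.prod isCompact_Icc
    obtain ⟨M, hM⟩ := hK.exists_bound_of_continuousOn
      ((aux_contOn σ1 hσ1 hσ1pos (0, 1)).mono hKS)
    have hF_meas : ∀ᶠ x in nhds f2, AEStronglyMeasurable
        (fun t => Real.log (σ1 (t, x) / σ1 (a, b))) (volume.restrict (Set.uIoc a f1)) := by
      filter_upwards [isOpen_Ioi.mem_nhds hf2] with x hx
      exact ((hcont1 x hx).mono hsubI).aestronglyMeasurable measurableSet_uIoc
    have hF_int : IntervalIntegrable (fun t => Real.log (σ1 (t, f2) / σ1 (a, b)))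
        volume a f1 := ((hcont1 f2 hf2).mono hsub1).intervalIntegrable
    have hcontF' : ContinuousOn
        (fun t : ℝ => fderiv ℝ σ1 (t, f2) (0, 1) / σ1 (t, f2)) (Set.Ioi (0:ℝ)) :=
      (aux_contOn σ1 hσ1 hσ1pos (0, 1)).comp
        (continuous_id.prodMk continuous_const).continuousOn
        (fun t ht => Set.mem_prod.mpr ⟨ht, hf2⟩)
    have hF'_meas : AEStronglyMeasurable
        (fun t : ℝ => fderiv ℝ σ1 (t, f2) (0, 1) / σ1 (t, f2))
        (volume.restrict (Set.uIoc a f1)) :=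
      (hcontF'.mono hsubI).aestronglyMeasurable measurableSet_uIoc
    have h_bound : ∀ᵐ t ∂(volume : Measure ℝ), t ∈ Set.uIoc a f1 →
        ∀ x ∈ Metric.ball f2 (f2 / 2),
          ‖fderiv ℝ σ1 (t, x) (0, 1) / σ1 (t, x)‖ ≤ M := by
      refine Filter.Eventually.of_forall (fun t ht x hx => ?_)
      exact hM (t, x) ⟨Set.Ioc_subset_Icc_self ht, hballIcc hx⟩
    have h_diff : ∀ᵐ t ∂(volume : Measure ℝ), t ∈ Set.uIoc a f1 →
        ∀ x ∈ Metric.ball f2 (f2 / 2),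
          HasDerivAt (fun x => Real.log (σ1 (t, x) / σ1 (a, b)))
            (fderiv ℝ σ1 (t, x) (0, 1) / σ1 (t, x)) x := by
      refine Filter.Eventually.of_forall (fun t ht x hx => ?_)
      have ht0 : (0:ℝ) < t := hsubI ht
      have hx0 : (0:ℝ) < x := hballpos x hx
      have hd := aux_hasDerivAt_snd σ1 hσ1 hσ1pos ht0 hx0
      have hopen : IsOpen {y : ℝ | ((t, y) : ℝ × ℝ) ∈ Set.Ioi (0:ℝ) ×ˢ Set.Ioi (0:ℝ)} :=
        isOpenS.preimage (continuous_const.prodMk continuous_id)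
      have hev : (fun y => Real.log (σ1 (t, y) / σ1 (a, b))) =ᶠ[nhds x]
          (fun y => Real.log (σ1 (t, y)) - Real.log (σ1 (a, b))) := by
        filter_upwards [hopen.mem_nhds (Set.mem_prod.mpr ⟨ht0, hx0⟩)] with y hy
        exact Real.log_div (hσ1pos _ hy).ne' hc1
      exact (hd.sub_const _).congr_of_eventuallyEq hev
    have hG1 := (intervalIntegral.hasDerivAt_integral_of_dominated_loc_of_deriv_le
      (F := fun x t => Real.log (σ1 (t, x) / σ1 (a, b)))
      (F' := fun x t => fderiv ℝ σ1 (t, x) (0, 1) / σ1 (t, x))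
      (Metric.ball_mem_nhds f2 hε) hF_meas hF_int hF'_meas h_bound intervalIntegrable_const h_diff).2
    -- evaluate the derivative integral using the compatibility relation and FTC-2
    have hval : (∫ t in a..f1, fderiv ℝ σ1 (t, f2) (0, 1) / σ1 (t, f2)) =
        Real.log (σ2 (f1, f2)) - Real.log (σ2 (a, f2)) := by
      have heq : Set.EqOn (fun t : ℝ => fderiv ℝ σ1 (t, f2) (0, 1) / σ1 (t, f2))
          (fun t : ℝ => fderiv ℝ σ2 (t, f2) (1, 0) / σ2 (t, f2)) (Set.uIcc a f1) := by
        intro t ht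
        have ht0 : (0:ℝ) < t := hsub1 ht
        have h1 := (aux_hasDerivAt_snd σ1 hσ1 hσ1pos ht0 hf2).deriv
        have h2 := (aux_hasDerivAt_fst σ2 hσ2 hσ2pos ht0 hf2).deriv
        simp only
        rw [← h1, hcompat t f2 ht0 hf2, h2]
      rw [intervalIntegral.integral_congr heq]
      have hcontF2 : ContinuousOn
          (fun t : ℝ => fderiv ℝ σ2 (t, f2) (1, 0) / σ2 (t, f2)) (Set.Ioi (0:ℝ)) :=
        (aux_contOn σ2 hσ2 hσ2pos (1, 0)).comp
          (continuous_id.prodMk continuous_const).continuousOn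
          (fun t ht => Set.mem_prod.mpr ⟨ht, hf2⟩)
      exact intervalIntegral.integral_eq_sub_of_hasDerivAt
        (fun t ht => aux_hasDerivAt_fst σ2 hσ2 hσ2pos (hsub1 ht) hf2)
        ((hcontF2.mono hsub1).intervalIntegrable)
    have htotal := hG1.add hG2
    convert htotal using 1
    case e'_4 => rfl
    case e'_5 => rfl
    case e'_8 => rfl
    rw [hval, Real.log_div (hσ2pos (f1,f2) (Set.mem_prod.mpr ⟨hf1, hf2⟩)).ne' hc2,
      Real.log_div (hσ2pos (a,f2) (Set.mem_prod.mpr ⟨ha, hf2⟩)).ne' hc2]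
    ring
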